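/- Let p be a prime, k ≥ 1 an integer, θ ∈ ℚ_p with |θ|_p ≥ 1, and 0 < δ < 1. Let λ be a null sequence in ℚ_p with |λ(i)|_p ≤ δ for all i. Define 𝓕_θ on B_δ by (𝓕_θ(x))_i = λ(i)·(F_i(x,θ))^k with F_i as above. Then for all x, y ∈ B_δ, ‖𝓕_θ(x) − 𝓕_θ(y)‖ ≤ δ·‖x − y‖; in particular 𝓕_θ is a contraction on B_δ with contraction constant δ. -/

import Mathlib

open Filter Topology BigOperators

noncomputable def Fmap {p : ℕ} [Fact p.Prime] (θ : ℚ_[p]) (x : ℕ → ℚ_[p]) (i : ℕ) : ℚ_[p] :=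
  ((θ - 1) * x i + (∑' j, x j) + 1) / ((∑' j, x j) + θ)

private lemma pow_sub_pow_norm_le {p : ℕ} [Fact p.Prime] (a b : ℚ_[p])
    (ha : ‖a‖ ≤ 1) (hb : ‖b‖ ≤ 1) (k : ℕ) : ‖a ^ k - b ^ k‖ ≤ ‖a - b‖ := by
  induction k with
  | zero => simp
  | succ n ih =>
    have h : a ^ (n + 1) - b ^ (n + 1) = a * (a ^ n - b ^ n) + (a - b) * b ^ n := by ring
    rw [h]
    refine (Padic.nonarchimedean _ _).trans (max_le ?_ ?_)
    · rw [norm_mul]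
      calc ‖a‖ * ‖a ^ n - b ^ n‖ ≤ 1 * ‖a - b‖ :=
            mul_le_mul ha ih (norm_nonneg _) zero_le_one
        _ = ‖a - b‖ := one_mul _
    · rw [norm_mul]
      calc ‖a - b‖ * ‖b ^ n‖ ≤ ‖a - b‖ * 1 := by
            refine mul_le_mul_of_nonneg_left ?_ (norm_nonneg _)
            rw [norm_pow]; exact pow_le_one₀ (norm_nonneg _) hb
        _ = ‖a - b‖ := mul_one _

theorem stmt5 (p k : ℕ) [Fact p.Prime] (hk : 1 ≤ k) (θ : ℚ_[p]) (hθ : 1 ≤ ‖θ‖)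
    (δ : ℝ) (hδ0 : 0 < δ) (hδ1 : δ < 1) (l : ℕ → ℚ_[p])
    (hl0 : Tendsto l atTop (nhds 0)) (hl : ∀ i, ‖l i‖ ≤ δ)
    (x y : ℕ → ℚ_[p]) (hx0 : Tendsto x atTop (nhds 0)) (hx : ∀ i, ‖x i‖ ≤ δ)
    (hy0 : Tendsto y atTop (nhds 0)) (hy : ∀ i, ‖y i‖ ≤ δ) :
    (⨆ i, ‖l i * (Fmap θ x i) ^ k - l i * (Fmap θ y i) ^ k‖) ≤
      δ * ⨆ i, ‖x i - y i‖ := by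
  have hsx : Summable x := by
    apply NonarchimedeanAddGroup.summable_of_tendsto_cofinite_zero
    rwa [Nat.cofinite_eq_atTop]
  have hsy : Summable y := by
    apply NonarchimedeanAddGroup.summable_of_tendsto_cofinite_zero
    rwa [Nat.cofinite_eq_atTop]
  set Sx := ∑' j, x j with hSx
  set Sy := ∑' j, y j with hSy
  set D := ⨆ i, ‖x i - y i‖ with hD
  -- bound on the sup D
  have hbdd : BddAbove (Set.range fun i => ‖x i - y i‖) := by
    refine ⟨δ, ?_⟩
    rintro _ ⟨i, rfl⟩
    show ‖x i - y i‖ ≤ δ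
    rw [sub_eq_add_neg]
    exact (Padic.nonarchimedean _ (-(y i))).trans
      (by simpa using max_le (hx i) (by simpa using hy i))
  have hDle : ∀ i, ‖x i - y i‖ ≤ D := fun i => le_ciSup hbdd i
  have hD0 : 0 ≤ D := le_trans (norm_nonneg _) (hDle 0)
  -- norm of the tsums
  have hSxn : ‖Sx‖ ≤ δ := by
    refine (IsUltrametricDist.norm_tsum_le x).trans (ciSup_le fun i => hx i)
  have hSyn : ‖Sy‖ ≤ δ := by
    refine (IsUltrametricDist.norm_tsum_le y).trans (ciSup_le fun i => hy i)
  have hSsub : ‖Sx - Sy‖ ≤ D := by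
    rw [hSx, hSy, ← Summable.tsum_sub hsx hsy]
    exact (IsUltrametricDist.norm_tsum_le _).trans (ciSup_le fun i => hDle i)
  -- denominators
  have hθ0 : (0:ℝ) < ‖θ‖ := lt_of_lt_of_le one_pos hθ
  have hden : ∀ S : ℚ_[p], ‖S‖ ≤ δ → ‖S + θ‖ = ‖θ‖ := by
    intro S hS
    have hne : ‖S‖ ≠ ‖θ‖ := ne_of_lt (lt_of_le_of_lt hS (lt_of_lt_of_le hδ1 hθ))
    rw [Padic.add_eq_max_of_ne hne, max_eq_right]
    exact le_of_lt (lt_of_le_of_lt hS (lt_of_lt_of_le hδ1 hθ))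
  have hdenx : ‖Sx + θ‖ = ‖θ‖ := hden Sx hSxn
  have hdeny : ‖Sy + θ‖ = ‖θ‖ := hden Sy hSyn
  have hdx0 : Sx + θ ≠ 0 := by
    intro h; rw [h, norm_zero] at hdenx; exact absurd hdenx.symm (ne_of_gt hθ0)
  have hdy0 : Sy + θ ≠ 0 := by
    intro h; rw [h, norm_zero] at hdeny; exact absurd hdeny.symm (ne_of_gt hθ0)
  -- |θ - 1| ≤ |θ|
  have hθ1 : ‖θ - 1‖ ≤ ‖θ‖ := by
    rw [sub_eq_add_neg]
    refine (Padic.nonarchimedean θ (-1)).trans ?_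
    simpa using max_le le_rfl hθ
  -- each Fmap has norm ≤ 1
  have hF1 : ∀ z : ℕ → ℚ_[p], (∀ i, ‖z i‖ ≤ δ) → ∀ i, ‖Fmap θ z i‖ ≤ 1 := by
    intro z hz i
    have hSz : ‖∑' j, z j‖ ≤ δ :=
      (IsUltrametricDist.norm_tsum_le z).trans (ciSup_le fun i => hz i)
    have hdz : ‖(∑' j, z j) + θ‖ = ‖θ‖ := hden _ hSz
    have hnum : ‖(θ - 1) * z i + (∑' j, z j) + 1‖ ≤ ‖θ‖ := by
      refine (Padic.nonarchimedean _ _).trans (max_le (?_) (le_trans ?_ hθ))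
      · refine (Padic.nonarchimedean _ _).trans (max_le ?_ (le_trans hSz (le_trans hδ1.le hθ)))
        rw [norm_mul]
        calc ‖θ - 1‖ * ‖z i‖ ≤ ‖θ‖ * 1 :=
              mul_le_mul hθ1 ((hz i).trans hδ1.le) (norm_nonneg _) (le_of_lt hθ0)
          _ = ‖θ‖ := mul_one _
      · simp
    rw [Fmap, norm_div, hdz, div_le_one hθ0]
    exact hnum
  -- the key estimate on the difference of Fmap
  have hFsub : ∀ i, ‖Fmap θ x i - Fmap θ y i‖ ≤ D := by
    intro i
    have key : Fmap θ x i - Fmap θ y i =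
        ((θ - 1) * ((x i - y i) * Sy + y i * (Sy - Sx) + θ * (x i - y i) + (Sx - Sy))) /
          ((Sx + θ) * (Sy + θ)) := by
      rw [Fmap, Fmap, div_sub_div _ _ hdx0 hdy0]
      congr 1
      ring
    rw [key, norm_div,
      show ‖(Sx + θ) * (Sy + θ)‖ = ‖θ‖ * ‖θ‖ by rw [norm_mul, hdenx, hdeny],
      norm_mul, div_le_iff₀ (by positivity)]
    have hterm : ‖(x i - y i) * Sy + y i * (Sy - Sx) + θ * (x i - y i) + (Sx - Sy)‖ ≤ ‖θ‖ * D := by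
      have h1 : ‖(x i - y i) * Sy‖ ≤ ‖θ‖ * D := by
        rw [norm_mul]
        calc ‖x i - y i‖ * ‖Sy‖ ≤ D * 1 :=
              mul_le_mul (hDle i) (hSyn.trans hδ1.le) (norm_nonneg _) hD0
          _ = 1 * D := by ring
          _ ≤ ‖θ‖ * D := mul_le_mul_of_nonneg_right hθ hD0
      have h2 : ‖y i * (Sy - Sx)‖ ≤ ‖θ‖ * D := by
        rw [norm_mul]
        calc ‖y i‖ * ‖Sy - Sx‖ ≤ 1 * D := by
              refine mul_le_mul ((hy i).trans hδ1.le) ?_ (norm_nonneg _) zero_le_one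
              rw [norm_sub_rev]; exact hSsub
          _ ≤ ‖θ‖ * D := mul_le_mul_of_nonneg_right hθ hD0
      have h3 : ‖θ * (x i - y i)‖ ≤ ‖θ‖ * D := by
        rw [norm_mul]
        exact mul_le_mul_of_nonneg_left (hDle i) (le_of_lt hθ0)
      have h4 : ‖Sx - Sy‖ ≤ ‖θ‖ * D := by
        calc ‖Sx - Sy‖ ≤ D := hSsub
          _ = 1 * D := (one_mul D).symm
          _ ≤ ‖θ‖ * D := mul_le_mul_of_nonneg_right hθ hD0
      refine (Padic.nonarchimedean _ _).trans (max_le ?_ h4)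
      refine (Padic.nonarchimedean _ _).trans (max_le ?_ h3)
      exact (Padic.nonarchimedean _ _).trans (max_le h1 h2)
    calc ‖θ - 1‖ * ‖(x i - y i) * Sy + y i * (Sy - Sx) + θ * (x i - y i) + (Sx - Sy)‖
        ≤ ‖θ‖ * (‖θ‖ * D) :=
          mul_le_mul hθ1 hterm (norm_nonneg _) (le_of_lt hθ0)
      _ = D * (‖θ‖ * ‖θ‖) := by ring
  -- conclude
  refine ciSup_le fun i => ?_
  rw [← mul_sub, norm_mul]
  calc ‖l i‖ * ‖(Fmap θ x i) ^ k - (Fmap θ y i) ^ k‖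
      ≤ δ * ‖(Fmap θ x i) ^ k - (Fmap θ y i) ^ k‖ :=
        mul_le_mul_of_nonneg_right (hl i) (norm_nonneg _)
    _ ≤ δ * ‖Fmap θ x i - Fmap θ y i‖ :=
        mul_le_mul_of_nonneg_left
          (pow_sub_pow_norm_le _ _ (hF1 x hx i) (hF1 y hy i) k) (le_of_lt hδ0)
    _ ≤ δ * D := mul_le_mul_of_nonneg_left (hFsub i) (le_of_lt hδ0)
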